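/- Let K be a 3DM instance and σ(K) the associated spanUFP instance. For every hyperedge h_ℓ = (x_i, y_j, z_k) ∈ E and every block I of σ(K), the eight tasks t_L(x_i), t_R(x_i), t_L(y_j), t_R(y_j), t_L(z_k), t_R(z_k), t_L(h_ℓ), t_R(h_ℓ) admit a feasible schedule in which all eight schedules are contained in I (concretely: t_L(x_i), t_L(y_j), t_L(z_k), t_L(h_ℓ) starting at the leftmost edge of I and t_R(x_i), t_R(y_j), t_R(z_k), t_R(h_ℓ) ending at the rightmost edge of I is feasible). -/

import Mathlib

/-- `ρ = max {29, 3q}`. -/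
def rho (q : ℕ) : ℕ := max 29 (3 * q)

/-- The number `x'_i = iρ + 1` associated to the node `x_i`. -/
def xnum (q i : ℕ) : ℤ := (i : ℤ) * (rho q : ℤ) + 1

/-- The number `y'_j = jρ² + 2` associated to the node `y_j`. -/
def ynum (q j : ℕ) : ℤ := (j : ℤ) * (rho q : ℤ) ^ 2 + 2

/-- The number `z'_k = kρ³ + 4` associated to the node `z_k`. -/
def znum (q k : ℕ) : ℤ := (k : ℤ) * (rho q : ℤ) ^ 3 + 4

/-- The number `h'_ℓ = -iρ - jρ² - kρ³ - 7` associated to the hyperedge `h_ℓ = (x_i, y_j, z_k)`. -/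
def hnum (q : ℕ) (h : ℕ × ℕ × ℕ) : ℤ :=
  -((h.1 : ℤ) * (rho q : ℤ)) - (h.2.1 : ℤ) * (rho q : ℤ) ^ 2 - (h.2.2 : ℤ) * (rho q : ℤ) ^ 3 - 7

/-- The set `Q(K)` of the `3q + m` integers associated to a 3DM instance `K = (q, E)`. -/
def QK (q : ℕ) (E : Finset (ℕ × ℕ × ℕ)) : Finset ℤ :=
  ((Finset.Icc 1 q).image (xnum q)) ∪ ((Finset.Icc 1 q).image (ynum q)) ∪
    ((Finset.Icc 1 q).image (znum q)) ∪ (E.image (hnum q))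

/-- `(q, E)` is a 3DM instance: every hyperedge is a triple of node indices in `{1, …, q}`
(`X`, `Y` and `Z` are identified with `{1, …, q}`). -/
def ValidE (q : ℕ) (E : Finset (ℕ × ℕ × ℕ)) : Prop :=
  ∀ h ∈ E, h.1 ∈ Finset.Icc 1 q ∧ h.2.1 ∈ Finset.Icc 1 q ∧ h.2.2 ∈ Finset.Icc 1 q

/-- A hypermatching: no two distinct hyperedges share a node. -/
def Matching (M : Finset (ℕ × ℕ × ℕ)) : Prop :=
  ∀ h ∈ M, ∀ h' ∈ M, h ≠ h' → h.1 ≠ h'.1 ∧ h.2.1 ≠ h'.2.1 ∧ h.2.2 ≠ h'.2.2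

/-- `μ = 1 + max_{u' ∈ Q(K)} 10|u'|`. -/
def mu (q : ℕ) (E : Finset (ℕ × ℕ × ℕ)) : ℕ :=
  1 + (QK q E).sup (fun u => 10 * u.natAbs)

/-- `A = 5μ + 4`. -/
def Aval (q : ℕ) (E : Finset (ℕ × ℕ × ℕ)) : ℕ := 5 * mu q E + 4

/-- The path of `σ(K)` has `(2A+1)q - 1` edges; edges are identified with the
integers `0, 1, …, (2A+1)q - 2`. -/
def numEdges (q : ℕ) (E : Finset (ℕ × ℕ × ℕ)) : ℤ := (2 * (Aval q E : ℤ) + 1) * q - 1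

/-- The capacity profile of `σ(K)`: within each block of `2A` consecutive edges, the
leftmost `A` edges have capacity `4A + 4` and the rightmost `A` edges have capacity `4A`;
blocks are separated by single edges of capacity `0`. -/
def cap (q : ℕ) (E : Finset (ℕ × ℕ × ℕ)) (e : ℤ) : ℤ :=
  let A : ℤ := (Aval q E : ℤ)
  let r := e % (2 * A + 1)
  if r < A then 4 * A + 4 else if r < 2 * A then 4 * A else 0

/-- An element `u ∈ X ∪ Y ∪ Z ∪ E` of the 3DM instance. -/
inductive Elem where
  | X : ℕ → Elem
  | Y : ℕ → Elem
  | Z : ℕ → Elem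
  | H : ℕ × ℕ × ℕ → Elem
deriving DecidableEq

/-- The number `u' ∈ Q(K)` associated to `u ∈ X ∪ Y ∪ Z ∪ E`. -/
def elemVal (q : ℕ) : Elem → ℤ
  | .X i => xnum q i
  | .Y j => ynum q j
  | .Z k => znum q k
  | .H h => hnum q h

/-- `u` is an actual element of the instance `(q, E)`. -/
def validElem (q : ℕ) (E : Finset (ℕ × ℕ × ℕ)) : Elem → Prop
  | .X i => i ∈ Finset.Icc 1 q
  | .Y j => j ∈ Finset.Icc 1 q
  | .Z k => k ∈ Finset.Icc 1 q
  | .H h => h ∈ E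

/-- A task of `σ(K)` is a pair `(u, s)` with `u ∈ X ∪ Y ∪ Z ∪ E`; `s = true` encodes the
task `t_L(u)` and `s = false` encodes the task `t_R(u)`. All tasks have weight 1. -/
abbrev UTask := Elem × Bool

/-- The length of a task: `t_L(u)` has length `A - 10u'`, `t_R(u)` has length `A + 10u'`. -/
def taskLen (q : ℕ) (E : Finset (ℕ × ℕ × ℕ)) (t : UTask) : ℤ :=
  if t.2 then (Aval q E : ℤ) - 10 * elemVal q t.1
  else (Aval q E : ℤ) + 10 * elemVal q t.1

/-- The demand of a task: `t_L(u)` has demand `A + 10u' + 1`, `t_R(u)` has demand `A - 10u'`. -/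
def taskDem (q : ℕ) (E : Finset (ℕ × ℕ × ℕ)) (t : UTask) : ℤ :=
  if t.2 then (Aval q E : ℤ) + 10 * elemVal q t.1 + 1
  else (Aval q E : ℤ) - 10 * elemVal q t.1

/-- The schedule of task `t`: the contiguous interval of `taskLen` edges starting at
edge `start t`. -/
noncomputable def sched (q : ℕ) (E : Finset (ℕ × ℕ × ℕ)) (start : UTask → ℤ) (t : UTask) : Finset ℤ :=
  Finset.Ico (start t) (start t + taskLen q E t)

/-- `(S, start)` is a feasible solution of `σ(K)`: every selected task is a task of the
instance, is scheduled (contiguously, with exactly its length) within the path, and on every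
edge `e` the total demand of the selected tasks whose schedule contains `e` is at most the
capacity of `e`. -/
def Feasible (q : ℕ) (E : Finset (ℕ × ℕ × ℕ)) (S : Finset UTask) (start : UTask → ℤ) : Prop :=
  (∀ t ∈ S, validElem q E t.1) ∧
  (∀ t ∈ S, 0 ≤ start t ∧ start t + taskLen q E t ≤ numEdges q E) ∧
  (∀ e : ℤ, 0 ≤ e → e < numEdges q E →
    ∑ t ∈ S.filter (fun t => e ∈ sched q E start t), taskDem q E t ≤ cap q E e)

/-- The first edge of the `b`-th block (`b ∈ {0, …, q-1}`). -/
def blockStart (q : ℕ) (E : Finset (ℕ × ℕ × ℕ)) (b : ℕ) : ℤ :=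
  (b : ℤ) * (2 * (Aval q E : ℤ) + 1)

/-- The `b`-th block of `2A` consecutive edges (`b ∈ {0, …, q-1}`). -/
noncomputable def block (q : ℕ) (E : Finset (ℕ × ℕ × ℕ)) (b : ℕ) : Finset ℤ :=
  Finset.Ico (blockStart q E b) (blockStart q E b + 2 * (Aval q E : ℤ))

/-- The eight tasks `t_L(x_i), t_R(x_i), t_L(y_j), t_R(y_j), t_L(z_k), t_R(z_k),
t_L(h_ℓ), t_R(h_ℓ)` associated to a hyperedge `h_ℓ = (x_i, y_j, z_k)`. -/
def edgeTasks (h : ℕ × ℕ × ℕ) : Finset UTask :=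
  {(Elem.X h.1, true), (Elem.X h.1, false), (Elem.Y h.2.1, true), (Elem.Y h.2.1, false),
   (Elem.Z h.2.2, true), (Elem.Z h.2.2, false), (Elem.H h, true), (Elem.H h, false)}

-- Auxiliary lemma: every value in `Q(K)` is small compared to `A`.
lemma qk_bound (q : ℕ) (E : Finset (ℕ × ℕ × ℕ)) {v : ℤ} (hv : v ∈ QK q E) :
    10 * v < (Aval q E : ℤ) ∧ -(Aval q E : ℤ) < 10 * v := by
  have h1 : 10 * v.natAbs ≤ (QK q E).sup (fun u => 10 * u.natAbs) :=
    Finset.le_sup (f := fun u => 10 * u.natAbs) hv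
  have h2 : Aval q E = 5 * (1 + (QK q E).sup (fun u => 10 * u.natAbs)) + 4 := rfl
  omega

lemma xnum_mem (q : ℕ) (E : Finset (ℕ × ℕ × ℕ)) {i : ℕ} (hi : i ∈ Finset.Icc 1 q) :
    xnum q i ∈ QK q E := by
  simp only [QK, Finset.mem_union, Finset.mem_image]
  exact Or.inl (Or.inl (Or.inl ⟨i, hi, rfl⟩))

lemma ynum_mem (q : ℕ) (E : Finset (ℕ × ℕ × ℕ)) {j : ℕ} (hj : j ∈ Finset.Icc 1 q) :
    ynum q j ∈ QK q E := by
  simp only [QK, Finset.mem_union, Finset.mem_image]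
  exact Or.inl (Or.inl (Or.inr ⟨j, hj, rfl⟩))

lemma znum_mem (q : ℕ) (E : Finset (ℕ × ℕ × ℕ)) {k : ℕ} (hk : k ∈ Finset.Icc 1 q) :
    znum q k ∈ QK q E := by
  simp only [QK, Finset.mem_union, Finset.mem_image]
  exact Or.inl (Or.inr ⟨k, hk, rfl⟩)

lemma hnum_mem (q : ℕ) (E : Finset (ℕ × ℕ × ℕ)) {h : ℕ × ℕ × ℕ} (hh : h ∈ E) :
    hnum q h ∈ QK q E := by
  simp only [QK, Finset.mem_union, Finset.mem_image]
  exact Or.inr ⟨h, hh, rfl⟩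

set_option maxHeartbeats 2000000 in
/-- For every hyperedge `h_ℓ = (x_i, y_j, z_k) ∈ E` and every block `I` of `σ(K)`, the eight
tasks `t_L(x_i), t_R(x_i), t_L(y_j), t_R(y_j), t_L(z_k), t_R(z_k), t_L(h_ℓ), t_R(h_ℓ)` admit a
feasible schedule contained in `I`: concretely, starting the four tasks `t_L(·)` at the leftmost
edge of `I` and ending the four tasks `t_R(·)` at the rightmost edge of `I` is feasible. -/
theorem hyperedge_block_schedule (q : ℕ) (E : Finset (ℕ × ℕ × ℕ)) (hE : ValidE q E)
    (h : ℕ × ℕ × ℕ) (hh : h ∈ E) (b : ℕ) (hb : b < q) :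
    Feasible q E (edgeTasks h)
      (fun t => if t.2 then blockStart q E b
        else blockStart q E b + 2 * (Aval q E : ℤ) - taskLen q E t) ∧
    ∀ t ∈ edgeTasks h,
      sched q E
        (fun t => if t.2 then blockStart q E b
          else blockStart q E b + 2 * (Aval q E : ℤ) - taskLen q E t) t ⊆ block q E b := by
  obtain ⟨hi, hj, hk⟩ := hE h hh
  have bx := qk_bound q E (xnum_mem q E hi)
  have by' := qk_bound q E (ynum_mem q E hj)
  have bz := qk_bound q E (znum_mem q E hk)
  have bh := qk_bound q E (hnum_mem q E hh)
  have hsum : xnum q h.1 + ynum q h.2.1 + znum q h.2.2 + hnum q h = 0 := by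
    simp only [xnum, ynum, znum, hnum]; ring
  have hBnn : 0 ≤ blockStart q E b := by
    have : (0:ℤ) ≤ (b : ℤ) := Int.natCast_nonneg b
    have : (0:ℤ) ≤ (Aval q E : ℤ) := Int.natCast_nonneg _
    unfold blockStart; positivity
  have hBtop : blockStart q E b + 2 * (Aval q E : ℤ) ≤ numEdges q E := by
    have hq : (b : ℤ) + 1 ≤ (q : ℤ) := by exact_mod_cast hb
    have hA0 : (0:ℤ) ≤ (Aval q E : ℤ) := Int.natCast_nonneg _
    have key : (0:ℤ) ≤ (2 * (Aval q E : ℤ) + 1) * ((q : ℤ) - (b : ℤ) - 1) :=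
      mul_nonneg (by linarith) (by linarith)
    unfold blockStart numEdges
    nlinarith
  -- containment of the eight schedules in the block
  have hsub : ∀ t ∈ edgeTasks h,
      sched q E
        (fun t => if t.2 then blockStart q E b
          else blockStart q E b + 2 * (Aval q E : ℤ) - taskLen q E t) t ⊆ block q E b := by
    intro t ht
    simp only [edgeTasks, Finset.mem_insert, Finset.mem_singleton] at ht
    rcases ht with rfl | rfl | rfl | rfl | rfl | rfl | rfl | rfl <;>
      · simp only [sched, block, taskLen, elemVal, if_true, if_false, Bool.false_eq_true,
          ite_true, ite_false]
        apply Finset.Ico_subset_Ico <;> omega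
  refine ⟨⟨?_, ?_, ?_⟩, hsub⟩
  · intro t ht
    simp only [edgeTasks, Finset.mem_insert, Finset.mem_singleton] at ht
    rcases ht with rfl | rfl | rfl | rfl | rfl | rfl | rfl | rfl <;>
      simp only [validElem] <;> assumption
  · intro t ht
    simp only [edgeTasks, Finset.mem_insert, Finset.mem_singleton] at ht
    rcases ht with rfl | rfl | rfl | rfl | rfl | rfl | rfl | rfl <;>
      · simp only [taskLen, elemVal, if_true, if_false, Bool.false_eq_true, ite_true, ite_false]
        omega
  · intro e he0 heN
    by_cases hin : blockStart q E b ≤ e ∧ e < blockStart q E b + 2 * (Aval q E : ℤ)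
    · -- inside the block
      obtain ⟨h1, h2⟩ := hin
      have hmod : e % (2 * (Aval q E : ℤ) + 1) = e - blockStart q E b := by
        conv_lhs => rw [show e = (e - blockStart q E b) + (b : ℤ) * (2 * (Aval q E : ℤ) + 1) by
          unfold blockStart; ring]
        rw [Int.add_mul_emod_self_right]
        have hB : blockStart q E b = (b : ℤ) * (2 * (Aval q E : ℤ) + 1) := rfl
        exact Int.emod_eq_of_lt (by omega) (by omega)
      have hcap : cap q E e = if e - blockStart q E b < (Aval q E : ℤ)
          then 4 * (Aval q E : ℤ) + 4 else 4 * (Aval q E : ℤ) := by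
        simp only [cap, hmod]
        split_ifs <;> omega
      rw [hcap, Finset.sum_filter]
      rw [show edgeTasks h = insert (Elem.X h.1, true) (insert (Elem.X h.1, false)
        (insert (Elem.Y h.2.1, true) (insert (Elem.Y h.2.1, false) (insert (Elem.Z h.2.2, true)
        (insert (Elem.Z h.2.2, false) (insert (Elem.H h, true) {(Elem.H h, false)})))))) from rfl]
      rw [Finset.sum_insert (by simp), Finset.sum_insert (by simp), Finset.sum_insert (by simp),
        Finset.sum_insert (by simp), Finset.sum_insert (by simp), Finset.sum_insert (by simp),
        Finset.sum_insert (by simp), Finset.sum_singleton]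
      simp only [sched, taskLen, taskDem, elemVal, Finset.mem_Ico, if_true, if_false,
        Bool.false_eq_true, ite_true, ite_false]
      split_ifs <;> omega
    · -- outside the block: no task covers e
      have hempty : (edgeTasks h).filter (fun t => e ∈ sched q E
          (fun t => if t.2 then blockStart q E b
            else blockStart q E b + 2 * (Aval q E : ℤ) - taskLen q E t) t) = ∅ := by
        rw [Finset.filter_eq_empty_iff]
        intro t ht he
        have := hsub t ht he
        simp only [block, Finset.mem_Ico] at this
        exact hin ⟨this.1, this.2⟩
      rw [hempty, Finset.sum_empty]
      simp only [cap]
      split_ifs <;> omega
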